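/- Under the setup of the quantile peer effects game (each agent i with a nonempty peer set, quantile levels T ⊂ [0,1] finite, coefficients λ_τ with ∑_{τ∈T} |λ_τ| < 1, types α_i ∈ R, and best responses BR_i(y) = (1 - λ_2)α_i + ∑_{τ∈T} λ_τ q_{τ,i}(y_{-i}) where λ_2 ∈ R is fixed), there exists a unique vector y* ∈ R^n with y*_i = BR_i(y*) for all i; i.e., the game has a unique pure-strategy Nash equilibrium. -/

import Mathlib

/-- The `k`-th smallest (0-indexed) outcome among the peers in `P` under outcome vector `y`. -/
noncomputable def orderStat {n : ℕ} (P : Finset (Fin n)) (y : Fin n → ℝ) (k : ℕ) : ℝ :=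
  ((P.val.map y).sort (· ≤ ·)).getD k 0

/-- The Type-7 sample τ-quantile of the outcomes of the peers in `P`:
`(1-ω) y_{(π)} + ω y_{(π+1)}` with `π = ⌊τ(d-1)⌋ + 1` (1-based; here 0-based `⌊τ(d-1)⌋`)
and `ω = τ(d-1) - ⌊τ(d-1)⌋`. -/
noncomputable def quantile7 {n : ℕ} (P : Finset (Fin n)) (y : Fin n → ℝ) (τ : ℝ) : ℝ :=
  let h : ℝ := τ * ((P.card : ℝ) - 1)
  (1 - (h - ⌊h⌋)) * orderStat P y ⌊h⌋.toNat + (h - ⌊h⌋) * orderStat P y (⌊h⌋.toNat + 1)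

theorem aux_sorted_getElem_le {l : List ℝ} (hs : l.Pairwise (· ≤ ·)) {k : ℕ} (hk : k < l.length)
    {v : ℝ} (hc : k + 1 ≤ l.countP (fun x => decide (x ≤ v))) : l[k] ≤ v := by
  by_contra hlt
  push_neg at hlt
  have hdrop : (l.drop k).countP (fun x => decide (x ≤ v)) = 0 := by
    rw [List.countP_eq_zero]
    intro x hx
    simp only [decide_eq_true_eq, not_le]
    obtain ⟨j, hj, rfl⟩ := List.getElem_of_mem hx
    have hkj : k + j < l.length := by simp [List.length_drop] at hj; omega
    rw [List.getElem_drop]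
    refine lt_of_lt_of_le hlt ?_
    rcases Nat.eq_zero_or_pos j with rfl | hj0
    · simp
    · exact hs.rel_get_of_lt (a := ⟨k, hk⟩) (b := ⟨k + j, hkj⟩) (by simpa using hj0)
  have hcount : l.countP (fun x => decide (x ≤ v)) ≤ k := by
    conv_lhs => rw [← l.take_append_drop k]
    rw [List.countP_append, hdrop]
    simpa using List.countP_le_length.trans (le_of_eq (by simp [List.length_take]; omega))
  omega

theorem aux_countP_ge_sorted {l : List ℝ} (hs : l.Pairwise (· ≤ ·)) {k : ℕ} (hk : k < l.length) :
    k + 1 ≤ l.countP (fun x => decide (x ≤ l[k])) := by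
  have htake : (l.take (k + 1)).countP (fun x => decide (x ≤ l[k])) = k + 1 := by
    rw [List.countP_eq_length.2, List.length_take]
    · omega
    · intro x hx
      simp only [decide_eq_true_eq]
      obtain ⟨j, hj, rfl⟩ := List.getElem_of_mem hx
      have hjk : j ≤ k := by simp [List.length_take] at hj; omega
      have hjl : j < l.length := by omega
      rw [List.getElem_take]
      exact hs.rel_get_of_le (a := ⟨j, hjl⟩) (b := ⟨k, hk⟩) hjk
  calc k + 1 = (l.take (k+1)).countP (fun x => decide (x ≤ l[k])) := htake.symm
    _ ≤ _ := (l.take_sublist (k+1)).countP_le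

theorem aux_orderStat_le {n : ℕ} (P : Finset (Fin n)) (y z : Fin n → ℝ) {c : ℝ} (hc : 0 ≤ c)
    (h : ∀ i, z i ≤ y i + c) (k : ℕ) : orderStat P z k ≤ orderStat P y k + c := by
  set a := ((P.val.map y).sort (· ≤ ·)) with ha
  set b := ((P.val.map z).sort (· ≤ ·)) with hb
  have hal : a.length = P.card := by simp [ha, Multiset.length_sort]
  have hbl : b.length = P.card := by simp [hb, Multiset.length_sort]
  by_cases hk : k < P.card
  · have hka : k < a.length := by omega
    have hkb : k < b.length := by omega
    rw [orderStat, orderStat, ← ha, ← hb, List.getD_eq_getElem _ _ hka,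
      List.getD_eq_getElem _ _ hkb]
    set v := a[k] with hv
    have h1 : k + 1 ≤ a.countP (fun x => decide (x ≤ v)) :=
      aux_countP_ge_sorted (Multiset.pairwise_sort _ _) hka
    have hae : (a : Multiset ℝ) = P.val.map y := Multiset.sort_eq _ _
    have hbe : (b : Multiset ℝ) = P.val.map z := Multiset.sort_eq _ _
    have h2 : Multiset.countP (fun x => x ≤ v) (P.val.map y)
        ≤ Multiset.countP (fun x => x ≤ v + c) (P.val.map z) := by
      rw [Multiset.countP_map, Multiset.countP_map]
      refine Multiset.card_le_card (Multiset.monotone_filter_right _ ?_)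
      intro i hi
      exact le_trans (h i) (by linarith)
    have h1' : k + 1 ≤ Multiset.countP (fun x => x ≤ v) (P.val.map y) := by
      rwa [← hae, Multiset.coe_countP]
    have h3 : k + 1 ≤ b.countP (fun x => decide (x ≤ v + c)) := by
      rw [← Multiset.coe_countP, hbe]; omega
    exact aux_sorted_getElem_le (Multiset.pairwise_sort _ _) hkb h3
  · rw [orderStat, orderStat, ← ha, ← hb, List.getD_eq_default _ _ (by omega),
      List.getD_eq_default _ _ (by omega)]
    linarith

theorem aux_abs_orderStat_sub_le {n : ℕ} (P : Finset (Fin n)) (y z : Fin n → ℝ) {c : ℝ}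
    (hc : 0 ≤ c) (h : ∀ i, |y i - z i| ≤ c) (k : ℕ) :
    |orderStat P y k - orderStat P z k| ≤ c := by
  rw [abs_sub_le_iff]
  constructor
  · have := aux_orderStat_le P z y hc (fun i => by have := h i; rw [abs_sub_le_iff] at this; linarith) k
    linarith
  · have := aux_orderStat_le P y z hc (fun i => by have := h i; rw [abs_sub_le_iff] at this; linarith) k
    linarith

theorem aux_abs_quantile7_sub_le {n : ℕ} (P : Finset (Fin n)) (y z : Fin n → ℝ) (τ : ℝ)
    {c : ℝ} (hc : 0 ≤ c) (h : ∀ i, |y i - z i| ≤ c) :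
    |quantile7 P y τ - quantile7 P z τ| ≤ c := by
  rw [quantile7, quantile7]
  set t : ℝ := τ * ((P.card : ℝ) - 1) with ht
  set ω : ℝ := t - ⌊t⌋ with hω
  have hω0 : 0 ≤ ω := by rw [hω]; exact sub_nonneg.2 (Int.floor_le t)
  have hω1 : ω ≤ 1 := by
    rw [hω]
    have := Int.lt_floor_add_one t
    linarith
  have e1 := aux_abs_orderStat_sub_le P y z hc h ⌊t⌋.toNat
  have e2 := aux_abs_orderStat_sub_le P y z hc h (⌊t⌋.toNat + 1)
  have key : (1 - ω) * orderStat P y ⌊t⌋.toNat + ω * orderStat P y (⌊t⌋.toNat + 1)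
      - ((1 - ω) * orderStat P z ⌊t⌋.toNat + ω * orderStat P z (⌊t⌋.toNat + 1))
      = (1 - ω) * (orderStat P y ⌊t⌋.toNat - orderStat P z ⌊t⌋.toNat)
      + ω * (orderStat P y (⌊t⌋.toNat + 1) - orderStat P z (⌊t⌋.toNat + 1)) := by ring
  rw [key]
  calc |(1 - ω) * (orderStat P y ⌊t⌋.toNat - orderStat P z ⌊t⌋.toNat)
      + ω * (orderStat P y (⌊t⌋.toNat + 1) - orderStat P z (⌊t⌋.toNat + 1))|
      ≤ |(1 - ω) * (orderStat P y ⌊t⌋.toNat - orderStat P z ⌊t⌋.toNat)|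
      + |ω * (orderStat P y (⌊t⌋.toNat + 1) - orderStat P z (⌊t⌋.toNat + 1))| := abs_add_le _ _
    _ = (1 - ω) * |orderStat P y ⌊t⌋.toNat - orderStat P z ⌊t⌋.toNat|
      + ω * |orderStat P y (⌊t⌋.toNat + 1) - orderStat P z (⌊t⌋.toNat + 1)| := by
        rw [abs_mul, abs_mul, abs_of_nonneg (by linarith : (0:ℝ) ≤ 1 - ω), abs_of_nonneg hω0]
    _ ≤ (1 - ω) * c + ω * c := by
        gcongr <;> first | exact e1 | exact e2 | linarith
    _ = c := by ring

/-- the quantile peer-effects game has a unique pure-strategy Nash equilibrium. -/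
theorem nash_equilibrium_exists_unique {n : ℕ} (peers : Fin n → Finset (Fin n))
    (hpeers : ∀ i, (peers i).Nonempty)
    (T : Finset ℝ) (hT : ∀ τ ∈ T, τ ∈ Set.Icc (0 : ℝ) 1)
    (lam : ℝ → ℝ) (hlam : ∑ τ ∈ T, |lam τ| < 1)
    (α : Fin n → ℝ) (lambda2 : ℝ) (BR : (Fin n → ℝ) → Fin n → ℝ)
    (hBR : ∀ y i, BR y i = (1 - lambda2) * α i + ∑ τ ∈ T, lam τ * quantile7 (peers i) y τ) :
    ∃! ystar : Fin n → ℝ, ∀ i, ystar i = BR ystar i := by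
  have hsum0 : (0:ℝ) ≤ ∑ τ ∈ T, |lam τ| := Finset.sum_nonneg fun τ _ => abs_nonneg _
  set K : NNReal := ⟨∑ τ ∈ T, |lam τ|, hsum0⟩ with hK
  have hK1 : K < 1 := by
    rw [← NNReal.coe_lt_coe]
    exact hlam
  have hlip : LipschitzWith K BR := by
    apply LipschitzWith.of_dist_le_mul
    intro y z
    rw [dist_pi_le_iff (by positivity)]
    intro i
    have hcd : 0 ≤ dist y z := dist_nonneg
    have hyz : ∀ j, |y j - z j| ≤ dist y z := fun j => by
      rw [← Real.dist_eq]; exact dist_le_pi_dist y z j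
    rw [Real.dist_eq, hBR, hBR]
    have : (1 - lambda2) * α i + ∑ τ ∈ T, lam τ * quantile7 (peers i) y τ
        - ((1 - lambda2) * α i + ∑ τ ∈ T, lam τ * quantile7 (peers i) z τ)
        = ∑ τ ∈ T, lam τ * (quantile7 (peers i) y τ - quantile7 (peers i) z τ) := by
      rw [show ∀ a b c : ℝ, a + b - (a + c) = b - c by intros; ring, ← Finset.sum_sub_distrib]
      exact Finset.sum_congr rfl fun τ _ => by ring
    rw [this]
    calc |∑ τ ∈ T, lam τ * (quantile7 (peers i) y τ - quantile7 (peers i) z τ)|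
        ≤ ∑ τ ∈ T, |lam τ * (quantile7 (peers i) y τ - quantile7 (peers i) z τ)| :=
          Finset.abs_sum_le_sum_abs _ _
      _ ≤ ∑ τ ∈ T, |lam τ| * dist y z := by
          apply Finset.sum_le_sum
          intro τ _
          rw [abs_mul]
          exact mul_le_mul_of_nonneg_left
            (aux_abs_quantile7_sub_le (peers i) y z τ hcd hyz) (abs_nonneg _)
      _ = (K : ℝ) * dist y z := by rw [← Finset.sum_mul]; rfl
  have hcontr : ContractingWith K BR := ⟨hK1, hlip⟩
  refine ⟨ContractingWith.fixedPoint BR hcontr, ?_, ?_⟩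
  · intro i
    exact (congrFun (ContractingWith.fixedPoint_isFixedPt hcontr) i).symm
  · intro y hy
    exact ContractingWith.fixedPoint_unique hcontr (funext fun i => (hy i).symm)
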